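/- If S is an additively reduced and additively Furstenberg semidomain, then S^× ⊆ A₊(S), i.e., every multiplicative unit of S is an additive atom. -/
import Mathlib


/-- Witness that `S` is a semidomain: an injective semiring hom into an integral domain. -/
structure SemidomainWitness (S : Type*) [CommSemiring S] where
  D : Type
  [commRing : CommRing D]
  [isDomain : IsDomain D]
  emb : S →+* D
  inj : Function.Injective emb

/-- `S` is a semidomain, i.e. (isomorphic to) a subsemiring of an integral domain. -/
def IsSemidomain (S : Type*) [CommSemiring S] : Prop := Nonempty (SemidomainWitness S)

/-- `S` is additively reduced: `0` is the only additively invertible element. -/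
def AddReduced (S : Type*) [AddZeroClass S] : Prop := ∀ a b : S, a + b = 0 → a = 0

/-- `s` is an atom of the additive monoid `(S, +)` (for `S` additively reduced):
it is nonzero and cannot be written as a sum of two nonzero elements. -/
def IsAddAtom {S : Type*} [AddZeroClass S] (s : S) : Prop :=
  s ≠ 0 ∧ ∀ a b : S, s = a + b → a = 0 ∨ b = 0

/-- `S` is additively Furstenberg: every nonzero element is divisible in `(S, +)`
by an additive atom. -/
def AddFurstenberg (S : Type*) [AddZeroClass S] : Prop :=
  ∀ s : S, s ≠ 0 → ∃ a t : S, IsAddAtom a ∧ s = a + t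

/-- In an additively reduced and additively Furstenberg semidomain, every multiplicative
unit is an additive atom. -/
theorem isAddAtom_of_isUnit
    {S : Type*} [CommSemiring S]
    (hS : IsSemidomain S) (hred : AddReduced S) (hfur : AddFurstenberg S)
    (u : S) (hu : IsUnit u) : IsAddAtom u := by
  obtain ⟨⟨D, emb, inj⟩⟩ := hS
  -- S is nontrivial
  have h01 : (0 : S) ≠ 1 := fun h => by
    have := congrArg emb h
    simp at this
  -- no zero divisors transferred from D
  have hmul : ∀ x y : S, x ≠ 0 → y ≠ 0 → x * y ≠ 0 := by
    intro x y hx hy hxy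
    have : emb x * emb y = 0 := by
      rw [← map_mul, hxy, map_zero]
    rcases mul_eq_zero.mp this with h | h
    · exact hx (inj (by simpa using h))
    · exact hy (inj (by simpa using h))
  obtain ⟨v, hv⟩ := hu.exists_right_inv
  have hu0 : u ≠ 0 := fun h => h01 (by rw [← hv, h, zero_mul])
  have hv0 : v ≠ 0 := fun h => h01 (by rw [← hv, h, mul_zero])
  refine ⟨hu0, fun a b hab => ?_⟩
  by_contra hcon
  push_neg at hcon
  obtain ⟨ha, hb⟩ := hcon
  obtain ⟨p, t, hp, hpt⟩ := hfur u hu0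
  have hpv : p * v ≠ 0 := hmul p v hp.1 hv0
  have : p = p * v * a + p * v * b := by
    calc p = p * (u * v) := by rw [hv, mul_one]
    _ = p * v * u := by ring
    _ = p * v * (a + b) := by rw [hab]
    _ = p * v * a + p * v * b := by ring
  rcases hp.2 _ _ this with h | h
  · exact hmul _ _ hpv ha h
  · exact hmul _ _ hpv hb h
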